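/- Let V be a ℚ-algebra and let π₀, π₁, …, πₙ be idempotents in V such that πᵢ·πⱼ = 0 whenever i < j. Define inductively πᵢ⁽⁰⁾ := πᵢ and πᵢ⁽ʳ⁺¹⁾ := (1 − ½πₙ⁽ʳ⁾)⋯(1 − ½π₍ᵢ₊₁₎⁽ʳ⁾) · πᵢ⁽ʳ⁾ · (1 − ½π₍ᵢ₋₁₎⁽ʳ⁾)⋯(1 − ½π₀⁽ʳ⁾). Then for every r ≥ 0 each πᵢ⁽ʳ⁾ is idempotent and πᵢ⁽ʳ⁾·πⱼ⁽ʳ⁾ = 0 whenever i ≠ j and i − j < r + 1. In particular, for every r ≥ n the idempotents π₀⁽ʳ⁾, …, πₙ⁽ʳ⁾ are mutually orthogonal, i.e. πᵢ⁽ʳ⁾·πⱼ⁽ʳ⁾ = 0 for all i ≠ j. -/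
import Mathlib


/-- One step of the non-commutative Gram–Schmidt process:
`gs n π i = (1 − ½πₙ)⋯(1 − ½π₍ᵢ₊₁₎) · πᵢ · (1 − ½π₍ᵢ₋₁₎)⋯(1 − ½π₀)`,
where the factors in each product are taken with decreasing index from left to right. -/
def gs {V : Type*} [Ring V] [Algebra ℚ V] (n : ℕ) (π : ℕ → V) (i : ℕ) : V :=
  (((List.range (n - i)).map (fun k => (1 : V) - ((2 : ℚ)⁻¹) • π (n - k))).prod)
    * π i *
  (((List.range i).map (fun k => (1 : V) - ((2 : ℚ)⁻¹) • π (i - 1 - k))).prod)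

/-- The `r`-th iterate of the non-commutative Gram–Schmidt process:
`πᵢ⁽⁰⁾ := πᵢ` and `πᵢ⁽ʳ⁺¹⁾ := (1 − ½πₙ⁽ʳ⁾)⋯(1 − ½π₍ᵢ₊₁₎⁽ʳ⁾)·πᵢ⁽ʳ⁾·(1 − ½π₍ᵢ₋₁₎⁽ʳ⁾)⋯(1 − ½π₀⁽ʳ⁾)`. -/
def gsIter {V : Type*} [Ring V] [Algebra ℚ V] (n : ℕ) (π : ℕ → V) : ℕ → ℕ → V
  | 0 => π
  | r + 1 => gs n (gsIter n π r)



section Aux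
variable {V : Type*} [Ring V] [Algebra ℚ V]

/-- `pd π s t = (1 - ½π s)(1 - ½π (s-1)) ⋯ (1 - ½π (s-t+1))`. -/
def pd (π : ℕ → V) (s t : ℕ) : V :=
  ((List.range t).map (fun k => (1 : V) - ((2 : ℚ)⁻¹) • π (s - k))).prod

lemma pd_back (π : ℕ → V) (s t : ℕ) :
    pd π s (t + 1) = pd π s t * ((1 : V) - ((2 : ℚ)⁻¹) • π (s - t)) := by
  simp [pd, List.range_succ]

lemma pd_front (π : ℕ → V) (s t : ℕ) :
    pd π s (t + 1) = ((1 : V) - ((2 : ℚ)⁻¹) • π s) * pd π (s - 1) t := by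
  rw [pd, List.range_succ_eq_map]
  simp only [List.map_cons, List.map_map, List.prod_cons, Nat.sub_zero]
  congr 2
  ext k
  simp [Function.comp, Nat.sub_sub, Nat.add_comm]

lemma pd_split (π : ℕ → V) (s t₁ t₂ : ℕ) :
    pd π s (t₁ + t₂) = pd π s t₁ * pd π (s - t₁) t₂ := by
  induction t₂ with
  | zero => simp [pd]
  | succ t ih =>
      rw [← Nat.add_assoc, pd_back, ih, pd_back, Nat.sub_sub, mul_assoc]

lemma mul_pd (π : ℕ → V) {s t : ℕ} (x : V) (h : ∀ k < t, x * π (s - k) = 0) :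
    x * pd π s t = x := by
  induction t with
  | zero => simp [pd]
  | succ t ih =>
      rw [pd_back, ← mul_assoc, ih (fun k hk => h k (by omega)),
        mul_sub, mul_one, mul_smul_comm, h t (by omega), smul_zero, sub_zero]

lemma pd_mul (π : ℕ → V) {s t : ℕ} (x : V) (h : ∀ k < t, π (s - k) * x = 0) :
    pd π s t * x = x := by
  induction t with
  | zero => simp [pd]
  | succ t ih =>
      rw [pd_back, mul_assoc, sub_mul, one_mul, smul_mul_assoc, h t (by omega),
        smul_zero, sub_zero, ih (fun k hk => h k (by omega))]

lemma gs_eq_pd (n : ℕ) (π : ℕ → V) (i : ℕ) :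
    gs n π i = pd π n (n - i) * π i * pd π (i - 1) i := rfl

lemma gs_step (n m : ℕ) (π : ℕ → V)
    (h1 : ∀ i, i ≤ n → π i * π i = π i)
    (h2 : ∀ i j, i ≤ n → j ≤ n → i < j → π i * π j = 0)
    (h3 : ∀ i j, j < i → i ≤ n → i - j ≤ m → π i * π j = 0) :
    (∀ i, i ≤ n → gs n π i * gs n π i = gs n π i) ∧
    (∀ i j, i ≤ n → j ≤ n → i < j → gs n π i * gs n π j = 0) ∧
    (∀ i j, j < i → i ≤ n → i - j ≤ m + 1 → gs n π i * gs n π j = 0) := by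
  -- kill lemma: for `k < j ≤ n`, `π k` kills `L_j * (π j * x)`.
  have hkill : ∀ k j (x : V), k < j → j ≤ n →
      π k * (pd π n (n - j) * (π j * x)) = 0 := by
    intro k j x hkj hjn
    rw [← mul_assoc, mul_pd π (π k) (fun l hl => h2 k (n - l) (by omega) (by omega) (by omega)),
      ← mul_assoc, h2 k j (by omega) hjn hkj, zero_mul]
  refine ⟨?_, ?_, ?_⟩
  · -- idempotency
    intro i hin
    rw [gs_eq_pd]
    have step1 : pd π (i - 1) i * (pd π n (n - i) * (π i * pd π (i - 1) i))
        = pd π n (n - i) * (π i * pd π (i - 1) i) :=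
      pd_mul π _ (fun k hk => hkill (i - 1 - k) i _ (by omega) hin)
    have step2 : π i * pd π n (n - i) = π i :=
      mul_pd π _ (fun l hl => h2 i (n - l) hin (by omega) (by omega))
    calc pd π n (n - i) * π i * pd π (i - 1) i * (pd π n (n - i) * π i * pd π (i - 1) i)
        = pd π n (n - i) * (π i * (pd π (i - 1) i * (pd π n (n - i) * (π i * pd π (i - 1) i)))) := by
          simp only [mul_assoc]
      _ = pd π n (n - i) * (π i * (pd π n (n - i) * (π i * pd π (i - 1) i))) := by rw [step1]
      _ = pd π n (n - i) * (π i * (π i * pd π (i - 1) i)) := by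
          rw [← mul_assoc (π i), step2]
      _ = pd π n (n - i) * (π i * pd π (i - 1) i) := by
          rw [← mul_assoc (π i), h1 i hin]
      _ = pd π n (n - i) * π i * pd π (i - 1) i := by rw [mul_assoc]
  · -- i < j
    intro i j hin hjn hij
    rw [gs_eq_pd, gs_eq_pd]
    have step1 : pd π (i - 1) i * (pd π n (n - j) * (π j * pd π (j - 1) j))
        = pd π n (n - j) * (π j * pd π (j - 1) j) :=
      pd_mul π _ (fun k hk => hkill (i - 1 - k) j _ (by omega) hjn)
    calc pd π n (n - i) * π i * pd π (i - 1) i * (pd π n (n - j) * π j * pd π (j - 1) j)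
        = pd π n (n - i) * (π i * (pd π (i - 1) i * (pd π n (n - j) * (π j * pd π (j - 1) j)))) := by
          simp only [mul_assoc]
      _ = pd π n (n - i) * (π i * (pd π n (n - j) * (π j * pd π (j - 1) j))) := by rw [step1]
      _ = 0 := by rw [hkill i j _ hij hjn, mul_zero]
  · -- j < i, i - j ≤ m + 1
    intro i j hji hin hgap
    rw [gs_eq_pd, gs_eq_pd]
    set c : ℚ := (2 : ℚ)⁻¹ with hc
    -- split R_i = A * B₂
    have hRsplit : pd π (i - 1) i = pd π (i - 1) (i - 1 - j) * pd π j (j + 1) := by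
      have h := pd_split π (i - 1) (i - 1 - j) (j + 1)
      rw [show i - 1 - j + (j + 1) = i from by omega,
        show i - 1 - (i - 1 - j) = j from by omega] at h
      exact h
    -- split L_j = C' * A
    have hLsplit : pd π n (n - j) = pd π n (n - i + 1) * pd π (i - 1) (i - 1 - j) := by
      have h := pd_split π n (n - i + 1) (i - 1 - j)
      rw [show n - i + 1 + (i - 1 - j) = n - j from by omega,
        show n - (n - i + 1) = i - 1 from by omega] at h
      exact h
    -- peel C' = C * (1 - c π i)
    have hC' : pd π n (n - i + 1) = pd π n (n - i) * ((1 : V) - c • π i) := by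
      have h := pd_back π n (n - i)
      rw [show n - (n - i) = i from by omega] at h
      exact h
    -- peel B₂ = (1 - c π j) * B
    have hB₂ : pd π j (j + 1) = ((1 : V) - c • π j) * pd π (j - 1) j :=
      pd_front π j j
    -- kills
    have k1 : π i * pd π (i - 1) (i - 1 - j) = π i :=
      mul_pd π _ (fun k hk => h3 i (i - 1 - k) (by omega) hin (by omega))
    have k2 : pd π (i - 1) (i - 1 - j) * π j = π j :=
      pd_mul π _ (fun k hk => h3 (i - 1 - k) j (by omega) (by omega) (by omega))
    have k3 : π j * pd π n (n - i + 1) = π j :=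
      mul_pd π _ (fun l hl => h2 j (n - l) (by omega) (by omega) (by omega))
    have k4 : π i * pd π n (n - i) = π i :=
      mul_pd π _ (fun l hl => h2 i (n - l) hin (by omega) (by omega))
    have k5 : pd π (j - 1) j * (pd π n (n - i + 1) * π j) = pd π n (n - i + 1) * π j := by
      refine pd_mul π _ (fun k hk => ?_)
      rw [← mul_assoc,
        mul_pd π _ (fun l hl => h2 (j - 1 - k) (n - l) (by omega) (by omega) (by omega)),
        h2 (j - 1 - k) j (by omega) (by omega) (by omega)]
    -- main computation
    have key : π i * (pd π (i - 1) i * (pd π n (n - j) * π j)) = 0 := by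
      have e1 : pd π n (n - j) * π j = pd π n (n - i + 1) * π j := by
        rw [hLsplit, mul_assoc, k2]
      have e2 : pd π j (j + 1) * (pd π n (n - i + 1) * π j)
          = pd π n (n - i + 1) * π j - c • π j := by
        rw [hB₂, mul_assoc, k5, sub_mul, one_mul, smul_mul_assoc, ← mul_assoc, k3,
          h1 j (by omega)]
      have e3 : π i * (pd π n (n - i + 1) * π j) = π i * π j - c • (π i * π j) := by
        rw [hC', mul_assoc, ← mul_assoc (π i), k4, sub_mul, one_mul, mul_sub,
          smul_mul_assoc, mul_smul_comm, ← mul_assoc, h1 i hin]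
      rw [e1, hRsplit, mul_assoc, e2, mul_sub, mul_smul_comm, k2, mul_sub, ← mul_assoc, k1,
        e3, mul_smul_comm, sub_sub, ← add_smul]
      rw [show c + c = (1 : ℚ) from by norm_num [hc], one_smul, sub_self]
    calc pd π n (n - i) * π i * pd π (i - 1) i * (pd π n (n - j) * π j * pd π (j - 1) j)
        = pd π n (n - i) * (π i * (pd π (i - 1) i * (pd π n (n - j) * π j))) * pd π (j - 1) j := by
          simp only [mul_assoc]
      _ = 0 := by rw [key, mul_zero, zero_mul]

end Aux

theorem stmt_1' {V : Type*} [Ring V] [Algebra ℚ V] (n : ℕ) (π : ℕ → V)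
    (hidem : ∀ i, i ≤ n → π i * π i = π i)
    (horth : ∀ i j, i ≤ n → j ≤ n → i < j → π i * π j = 0) :
    (∀ r, ∀ i, i ≤ n → gsIter n π r i * gsIter n π r i = gsIter n π r i) ∧
    (∀ r : ℕ, ∀ i j, i ≤ n → j ≤ n → i ≠ j → (i : ℤ) - (j : ℤ) < (r : ℤ) + 1 →
      gsIter n π r i * gsIter n π r j = 0) ∧
    (∀ r, n ≤ r → ∀ i j, i ≤ n → j ≤ n → i ≠ j →
      gsIter n π r i * gsIter n π r j = 0) := by
  have key : ∀ r : ℕ,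
      (∀ i, i ≤ n → gsIter n π r i * gsIter n π r i = gsIter n π r i) ∧
      (∀ i j, i ≤ n → j ≤ n → i < j → gsIter n π r i * gsIter n π r j = 0) ∧
      (∀ i j, j < i → i ≤ n → i - j ≤ r → gsIter n π r i * gsIter n π r j = 0) := by
    intro r
    induction r with
    | zero =>
        exact ⟨hidem, horth, fun i j hji hin hgap => absurd hgap (by omega)⟩
    | succ r ih =>
        exact gs_step n r (gsIter n π r) ih.1 ih.2.1 ih.2.2
  refine ⟨fun r => (key r).1, ?_, ?_⟩
  · intro r i j hin hjn hij hgap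
    rcases Nat.lt_or_ge i j with h | h
    · exact (key r).2.1 i j hin hjn h
    · exact (key r).2.2 i j (by omega) hin (by omega)
  · intro r hnr i j hin hjn hij
    rcases Nat.lt_or_ge i j with h | h
    · exact (key r).2.1 i j hin hjn h
    · exact (key r).2.2 i j (by omega) hin (by omega)

/-- Iterating the non-commutative Gram–Schmidt process: starting from idempotents
`π₀, …, πₙ` with `πᵢ·πⱼ = 0` for `i < j`, after `r` iterations each `πᵢ⁽ʳ⁾` is idempotent and
`πᵢ⁽ʳ⁾·πⱼ⁽ʳ⁾ = 0` whenever `i ≠ j` and `i − j < r + 1`; in particular for every `r ≥ n` the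
idempotents `π₀⁽ʳ⁾, …, πₙ⁽ʳ⁾` are mutually orthogonal. -/
theorem stmt_1 {V : Type*} [Ring V] [Algebra ℚ V] (n : ℕ) (π : ℕ → V)
    (hidem : ∀ i, i ≤ n → π i * π i = π i)
    (horth : ∀ i j, i ≤ n → j ≤ n → i < j → π i * π j = 0) :
    (∀ r, ∀ i, i ≤ n → gsIter n π r i * gsIter n π r i = gsIter n π r i) ∧
    (∀ r : ℕ, ∀ i j, i ≤ n → j ≤ n → i ≠ j → (i : ℤ) - (j : ℤ) < (r : ℤ) + 1 →
      gsIter n π r i * gsIter n π r j = 0) ∧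
    (∀ r, n ≤ r → ∀ i j, i ≤ n → j ≤ n → i ≠ j →
      gsIter n π r i * gsIter n π r j = 0) := by
  exact stmt_1' n π hidem horth
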